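/- The optimal value function is the statewise maximum over stationary policies: if V* : S → ℝ satisfies LV* = V*, then for every state s ∈ S, V*(s) = max over stationary policies π : S → A of V^π(s), where V^π is the unique fixed point of the policy operator L^π (the maximum is over the finitely many policies and is attained). -/
import Mathlib


/-- The Bellman operator of a finite MDP with transition probabilities `P`,
reward `R`, and discount factor `γ`:
`(L V)(s) = R s + γ * max_{a} ∑_{s'} P s a s' * V s'`. -/
noncomputable def bellmanOp {S A : Type*} [Fintype S] [Fintype A] [Nonempty A]
    (P : S → A → S → ℝ) (R : S → ℝ) (γ : ℝ) (V : S → ℝ) : S → ℝ :=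
  fun s => R s + γ * Finset.univ.sup' Finset.univ_nonempty
    (fun a : A => ∑ s' : S, P s a s' * V s')

/-- The policy operator of a stationary policy `π : S → A`:
`(L^π V)(s) = R s + γ * ∑_{s'} P s (π s) s' * V s'`. -/
noncomputable def policyOp {S A : Type*} [Fintype S]
    (P : S → A → S → ℝ) (R : S → ℝ) (γ : ℝ) (π : S → A) (V : S → ℝ) : S → ℝ :=
  fun s => R s + γ * ∑ s' : S, P s (π s) s' * V s'

/-- The optimal value function is the statewise maximum over the finitely
many stationary policies of their policy values: if `L V* = V*` and, for each
policy `π`, `Vpol π` is the (unique) fixed point of the policy operator `L^π`,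
then for every state `s`, `V*(s) = max_π (Vpol π)(s)` (attained). -/
theorem optimal_value_is_max_over_policies
    {S A : Type*} [Fintype S] [Nonempty S] [DecidableEq S] [Fintype A] [Nonempty A]
    (P : S → A → S → ℝ) (R : S → ℝ) (γ : ℝ) (hγ0 : 0 < γ) (hγ1 : γ < 1)
    (hP0 : ∀ s a s', 0 ≤ P s a s') (hP1 : ∀ s a, ∑ s' : S, P s a s' = 1)
    (Vstar : S → ℝ) (hfix : bellmanOp P R γ Vstar = Vstar)
    (Vpol : (S → A) → S → ℝ)
    (hVpol : ∀ π : S → A, policyOp P R γ π (Vpol π) = Vpol π) :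
    ∀ s : S,
      Vstar s
        = Finset.univ.sup' ⟨fun _ => Classical.arbitrary A, Finset.mem_univ _⟩
            (fun π : S → A => Vpol π s) := by
  classical
  -- expectation monotonicity helper
  have hE : ∀ (s : S) (a : A) (x y : S → ℝ), (∀ s', x s' ≤ y s') →
      ∑ s' : S, P s a s' * x s' ≤ ∑ s' : S, P s a s' * y s' := by
    intro s a x y h
    exact Finset.sum_le_sum fun s' _ => mul_le_mul_of_nonneg_left (h s') (hP0 s a s')
  have hEconst : ∀ (s : S) (a : A) (c : ℝ), ∑ s' : S, P s a s' * c = c := by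
    intro s a c
    rw [← Finset.sum_mul, hP1, one_mul]
  -- Lemma A : Vpol π ≤ Vstar
  have hA : ∀ (π : S → A) (s : S), Vpol π s ≤ Vstar s := by
    intro π
    obtain ⟨s0, _, hs0⟩ := Finset.exists_max_image Finset.univ
      (fun s => Vpol π s - Vstar s) Finset.univ_nonempty
    set D := Vpol π s0 - Vstar s0 with hD
    have hcontr : D ≤ γ * D := by
      have h1 : Vpol π s0 = R s0 + γ * ∑ s' : S, P s0 (π s0) s' * Vpol π s' := by
        conv_lhs => rw [← hVpol π]
        rfl
      have h2 : R s0 + γ * ∑ s' : S, P s0 (π s0) s' * Vstar s' ≤ Vstar s0 := by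
        conv_rhs => rw [← hfix]
        unfold bellmanOp
        gcongr
        exact Finset.le_sup' (fun a : A => ∑ s' : S, P s0 a s' * Vstar s')
          (Finset.mem_univ (π s0))
      have h3 : D ≤ γ * ∑ s' : S, P s0 (π s0) s' * (Vpol π s' - Vstar s') := by
        have : Vpol π s0 - Vstar s0 ≤
            (R s0 + γ * ∑ s' : S, P s0 (π s0) s' * Vpol π s')
            - (R s0 + γ * ∑ s' : S, P s0 (π s0) s' * Vstar s') := by
          rw [← h1]; linarith
        calc D ≤ _ := this
          _ = γ * ∑ s' : S, P s0 (π s0) s' * (Vpol π s' - Vstar s') := by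
            have hZ : ∑ s' : S, P s0 (π s0) s' * (Vpol π s' - Vstar s')
                = (∑ s' : S, P s0 (π s0) s' * Vpol π s')
                  - ∑ s' : S, P s0 (π s0) s' * Vstar s' := by
              rw [← Finset.sum_sub_distrib]
              exact Finset.sum_congr rfl fun s' _ => by ring
            rw [hZ]; ring
      have h4 : ∑ s' : S, P s0 (π s0) s' * (Vpol π s' - Vstar s') ≤ D := by
        calc ∑ s' : S, P s0 (π s0) s' * (Vpol π s' - Vstar s')
            ≤ ∑ s' : S, P s0 (π s0) s' * D :=
              hE s0 (π s0) _ _ (fun s' => hs0 s' (Finset.mem_univ s'))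
          _ = D := hEconst _ _ _
      calc D ≤ γ * ∑ s' : S, P s0 (π s0) s' * (Vpol π s' - Vstar s') := h3
        _ ≤ γ * D := by nlinarith
    have hDle : D ≤ 0 := by nlinarith
    intro s
    have := hs0 s (Finset.mem_univ s)
    linarith
  -- greedy policy
  have hgreedy : ∀ s : S, ∃ a : A,
      Finset.univ.sup' Finset.univ_nonempty (fun a : A => ∑ s' : S, P s a s' * Vstar s')
        = ∑ s' : S, P s a s' * Vstar s' := by
    intro s
    obtain ⟨a, _, ha⟩ := Finset.exists_mem_eq_sup' Finset.univ_nonempty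
      (fun a : A => ∑ s' : S, P s a s' * Vstar s')
    exact ⟨a, ha⟩
  choose πg hπg using hgreedy
  have hfixg : ∀ s, policyOp P R γ πg Vstar s = Vstar s := by
    intro s
    unfold policyOp
    rw [← hπg s]
    conv_rhs => rw [← hfix]
    rfl
  -- uniqueness : Vpol πg = Vstar
  have hB : ∀ s : S, Vpol πg s = Vstar s := by
    obtain ⟨s0, _, hs0⟩ := Finset.exists_max_image Finset.univ
      (fun s => |Vpol πg s - Vstar s|) Finset.univ_nonempty
    set M := |Vpol πg s0 - Vstar s0| with hM
    have hM0 : 0 ≤ M := abs_nonneg _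
    have hcontr : M ≤ γ * M := by
      have h1 : Vpol πg s0 = R s0 + γ * ∑ s' : S, P s0 (πg s0) s' * Vpol πg s' := by
        conv_lhs => rw [← hVpol πg]
        rfl
      have h2 : Vstar s0 = R s0 + γ * ∑ s' : S, P s0 (πg s0) s' * Vstar s' := by
        conv_lhs => rw [← hfixg s0]
        rfl
      have hdiff : Vpol πg s0 - Vstar s0
          = γ * ∑ s' : S, P s0 (πg s0) s' * (Vpol πg s' - Vstar s') := by
        have hZ : ∑ s' : S, P s0 (πg s0) s' * (Vpol πg s' - Vstar s')
            = (∑ s' : S, P s0 (πg s0) s' * Vpol πg s')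
              - ∑ s' : S, P s0 (πg s0) s' * Vstar s' := by
          rw [← Finset.sum_sub_distrib]
          exact Finset.sum_congr rfl fun s' _ => by ring
        rw [h1, h2, hZ]; ring
      calc M = |γ * ∑ s' : S, P s0 (πg s0) s' * (Vpol πg s' - Vstar s')| := by
            rw [hM, hdiff]
        _ = γ * |∑ s' : S, P s0 (πg s0) s' * (Vpol πg s' - Vstar s')| := by
            rw [abs_mul, abs_of_pos hγ0]
        _ ≤ γ * M := by
            gcongr
            calc |∑ s' : S, P s0 (πg s0) s' * (Vpol πg s' - Vstar s')|
                ≤ ∑ s' : S, |P s0 (πg s0) s' * (Vpol πg s' - Vstar s')| :=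
                  Finset.abs_sum_le_sum_abs _ _
              _ = ∑ s' : S, P s0 (πg s0) s' * |Vpol πg s' - Vstar s'| := by
                  apply Finset.sum_congr rfl
                  intro s' _
                  rw [abs_mul, abs_of_nonneg (hP0 _ _ _)]
              _ ≤ ∑ s' : S, P s0 (πg s0) s' * M :=
                  hE s0 (πg s0) _ _ (fun s' => hs0 s' (Finset.mem_univ s'))
              _ = M := hEconst _ _ _
    have hM00 : M ≤ 0 := by nlinarith
    intro s
    have h := hs0 s (Finset.mem_univ s)
    have : |Vpol πg s - Vstar s| ≤ 0 := le_trans h hM00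
    have := abs_nonneg (Vpol πg s - Vstar s)
    have habs : |Vpol πg s - Vstar s| = 0 := le_antisymm ‹_› ‹_›
    have := abs_eq_zero.mp habs
    linarith
  intro s
  apply le_antisymm
  · calc Vstar s = Vpol πg s := (hB s).symm
      _ ≤ _ := Finset.le_sup' (fun π : S → A => Vpol π s) (Finset.mem_univ πg)
  · exact Finset.sup'_le _ _ fun π _ => hA π s
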